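/- Let X be the self-adjoint operator on L²(−δ,δ) associated with the form x[f] = ∫_{−δ}^{δ}|f'|² − β(|f(δ)|² + |f(−δ)|²) + M²∫_{−δ}^{0}|f|² + m²∫_0^δ|f|² − (M−m)|f(0)|², on H¹(−δ,δ), with m < 0 < M and β > 0 fixed. Then E₁(X) = O(e^{−min(|m|,M)δ/2}) as min(−m, M) → +∞, and for each j ≥ 2 there are constants C₁, C₂ > 0 with E_j(X) ≥ min(m², M²) + C₁ j² − C₂. -/

import Mathlib

/-- `lam` is an eigenvalue of the two-mass operator `X` on `(−δ, δ)`: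
`X f = −f'' + (M² 1_{(−δ,0)} + m² 1_{(0,δ)}) f` with boundary conditions
`f'(δ) = β f(δ)`, `f'(−δ) = −β f(−δ)` and jump condition
`f'(0⁺) − f'(0⁻) + (|m| + M) f(0) = 0`, encoded through the two smooth pieces
`u` (on `[−δ,0]`) and `v` (on `[0,δ]`). -/
def IsXEigen (δ β m M lam : ℝ) : Prop :=
  ∃ u v : ℝ → ℝ, ContDiff ℝ 2 u ∧ ContDiff ℝ 2 v ∧
    ((∃ t ∈ Set.Icc (-δ) 0, u t ≠ 0) ∨ (∃ t ∈ Set.Icc 0 δ, v t ≠ 0)) ∧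
    (∀ t, deriv (deriv u) t = (M ^ 2 - lam) * u t) ∧
    (∀ t, deriv (deriv v) t = (m ^ 2 - lam) * v t) ∧
    u 0 = v 0 ∧
    deriv v 0 - deriv u 0 + (|m| + M) * u 0 = 0 ∧
    deriv u (-δ) = -β * u (-δ) ∧
    deriv v δ = β * v δ

open Real

noncomputable def Pf (β x t : ℝ) : ℝ := (x-β)*Real.exp (x*t) + (x+β)*Real.exp (-(x*t))
noncomputable def Pt (β x t : ℝ) : ℝ := x*((x-β)*Real.exp (x*t) - (x+β)*Real.exp (-(x*t)))

lemma hasDerivAt_Pf (β x t : ℝ) : HasDerivAt (fun s => Pf β x s) (Pt β x t) t := by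
  have h1 : HasDerivAt (fun s : ℝ => x*s) x t := by simpa using (hasDerivAt_id t).const_mul x
  have h2 := (h1.exp).const_mul (x-β)
  have h3 := ((h1.neg).exp).const_mul (x+β)
  have := h2.add h3
  refine this.congr_deriv ?_
  simp [Pt]; ring
lemma hasDerivAt_Pt (β x t : ℝ) : HasDerivAt (fun s => Pt β x s) (x^2 * Pf β x t) t := by
  have h1 : HasDerivAt (fun s : ℝ => x*s) x t := by simpa using (hasDerivAt_id t).const_mul x
  have h2 := (h1.exp).const_mul (x-β)
  have h3 := ((h1.neg).exp).const_mul (x+β)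
  have := (h2.sub h3).const_mul x
  refine this.congr_deriv ?_
  simp [Pf]; ring
lemma Pf_pos {β x : ℝ} (hβ : 0 < β) (hx : β < x) (t : ℝ) : 0 < Pf β x t := by
  have h1 : 0 < x - β := by linarith
  have h2 : 0 < x + β := by linarith
  have := Real.exp_pos (x*t); have := Real.exp_pos (-(x*t))
  unfold Pf; positivity
lemma Pf_zero (β x : ℝ) : Pf β x 0 = 2*x := by simp [Pf]; ring
lemma Pt_zero (β x : ℝ) : Pt β x 0 = -β * Pf β x 0 := by simp [Pf, Pt]; ring

lemma cd2 {u : ℝ → ℝ} (hu : ContDiff ℝ 2 u) :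
    Differentiable ℝ u ∧ Differentiable ℝ (deriv u) := by
  have h2 : ContDiff ℝ ((1:ℕ) + 1) u := by exact_mod_cast hu
  have := contDiff_succ_iff_deriv.mp h2
  exact ⟨this.1, this.2.2.differentiable (by norm_num)⟩

lemma decomp {k : ℝ} (hk : 0 < k) {u : ℝ → ℝ} (hu : ContDiff ℝ 2 u)
    (hode : ∀ t, deriv (deriv u) t = k^2 * u t) (t : ℝ) :
    u t = ((u 0 + deriv u 0 / k)/2) * Real.exp (k*t)
        + ((u 0 - deriv u 0 / k)/2) * Real.exp (-(k*t)) := by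
  obtain ⟨hud, hud'⟩ := cd2 hu
  have hexp : ∀ s : ℝ, HasDerivAt (fun s : ℝ => Real.exp (k*s)) (k * Real.exp (k*s)) s := by
    intro s
    have h1 : HasDerivAt (fun s : ℝ => k*s) k s := by simpa using (hasDerivAt_id s).const_mul k
    simpa [mul_comm] using h1.exp
  have hexp' : ∀ s : ℝ, HasDerivAt (fun s : ℝ => Real.exp (-(k*s))) (-k * Real.exp (-(k*s))) s := by
    intro s
    have h1 : HasDerivAt (fun s : ℝ => k*s) k s := by simpa using (hasDerivAt_id s).const_mul k
    simpa [mul_comm] using h1.neg.exp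
  have hfc : ∀ s : ℝ, (deriv u s - k * u s) * Real.exp (k*s)
      = (deriv u 0 - k * u 0) := by
    have hdf : ∀ s : ℝ, HasDerivAt (fun s => (deriv u s - k * u s) * Real.exp (k*s)) 0 s := by
      intro s
      have h1 : HasDerivAt (fun s => deriv u s - k * u s)
          (deriv (deriv u) s - k * deriv u s) s :=
        ((hud' s).hasDerivAt).sub (((hud s).hasDerivAt).const_mul k)
      have := h1.mul (hexp s)
      refine this.congr_deriv ?_
      rw [hode s]; ring
    have hc := is_const_of_deriv_eq_zero (fun s => (hdf s).differentiableAt)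
      (fun s => (hdf s).deriv)
    intro s; simpa using hc s 0
  have hgc : ∀ s : ℝ, (deriv u s + k * u s) * Real.exp (-(k*s))
      = (deriv u 0 + k * u 0) := by
    have hdf : ∀ s : ℝ, HasDerivAt (fun s => (deriv u s + k * u s) * Real.exp (-(k*s))) 0 s := by
      intro s
      have h1 : HasDerivAt (fun s => deriv u s + k * u s)
          (deriv (deriv u) s + k * deriv u s) s :=
        ((hud' s).hasDerivAt).add (((hud s).hasDerivAt).const_mul k)
      have := h1.mul (hexp' s)
      refine this.congr_deriv ?_
      rw [hode s]; ring
    have hc := is_const_of_deriv_eq_zero (fun s => (hdf s).differentiableAt)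
      (fun s => (hdf s).deriv)
    intro s; simpa using hc s 0
  have e1 := hfc t
  have e2 := hgc t
  have hab : Real.exp (k*t) * Real.exp (-(k*t)) = 1 := by
    rw [← Real.exp_add]; simp
  have hk' : k ≠ 0 := ne_of_gt hk
  have hu1 : deriv u t - k * u t = (deriv u 0 - k * u 0) * Real.exp (-(k*t)) := by
    have := congrArg (· * Real.exp (-(k*t))) e1
    simpa [mul_assoc, hab] using this
  have hu2 : deriv u t + k * u t = (deriv u 0 + k * u 0) * Real.exp (k*t) := by
    have := congrArg (· * Real.exp (k*t)) e2
    have hab' : Real.exp (-(k*t)) * Real.exp (k*t) = 1 := by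
      rw [← Real.exp_add]; simp
    simpa [mul_assoc, hab'] using this
  have : 2 * k * u t = (deriv u 0 + k * u 0) * Real.exp (k*t)
      - (deriv u 0 - k * u 0) * Real.exp (-(k*t)) := by linarith
  field_simp
  nlinarith [this]


lemma derivOfExp (a b k : ℝ) {u : ℝ → ℝ}
    (h : ∀ s, u s = a*Real.exp (k*s) + b*Real.exp (-(k*s))) (t : ℝ) :
    deriv u t = a*(k*Real.exp (k*t)) - b*(k*Real.exp (-(k*t))) := by
  rw [funext h]
  have h1 : HasDerivAt (fun s : ℝ => k*s) k t := by simpa using (hasDerivAt_id t).const_mul k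
  have h2 := (h1.exp).const_mul a
  have h3 := ((h1.neg).exp).const_mul b
  have h4 := h2.add h3
  rw [show deriv (fun x => a * rexp (k * x) + b * rexp (-(k * x))) t = a * (rexp (k * t) * k) + b * (rexp (-(k * t)) * -k) from h4.deriv]; ring

lemma decomp' {k : ℝ} (hk : 0 < k) {u : ℝ → ℝ} (hu : ContDiff ℝ 2 u)
    (hode : ∀ t, deriv (deriv u) t = k^2 * u t) :
    ∃ a b : ℝ, (∀ t, u t = a*Real.exp (k*t) + b*Real.exp (-(k*t)))
      ∧ (∀ t, deriv u t = a*(k*Real.exp (k*t)) - b*(k*Real.exp (-(k*t)))) := by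
  refine ⟨_, _, decomp hk hu hode, derivOfExp _ _ _ (decomp hk hu hode)⟩

lemma robin_left {δ β k : ℝ} (hβ : 0 < β) (hk : β < k) {u : ℝ → ℝ} (hu : ContDiff ℝ 2 u)
    (hode : ∀ t, deriv (deriv u) t = k^2 * u t)
    (hrob : deriv u (-δ) = -β * u (-δ)) :
    ∃ A : ℝ, (∀ t, u t = A * Pf β k (t+δ)) ∧ (∀ t, deriv u t = A * Pt β k (t+δ)) := by
  have hk0 : 0 < k := lt_trans hβ hk
  obtain ⟨a, b, hval, hder⟩ := decomp' hk0 hu hode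
  have hkβ : k - β ≠ 0 := by intro h; nlinarith
  have hE : (0:ℝ) < Real.exp (k*δ) := Real.exp_pos _
  have hE' : (0:ℝ) < Real.exp (-(k*δ)) := Real.exp_pos _
  have hee : Real.exp (k*δ) * Real.exp (-(k*δ)) = 1 := by rw [← Real.exp_add]; simp
  have hm1 : k*(-δ) = -(k*δ) := by ring
  have hm2 : -(k*(-δ)) = k*δ := by ring
  have hr := hrob
  rw [hval (-δ), hder (-δ), hm1, neg_neg] at hr
  have hbrel : b * ((k-β)*Real.exp (k*δ)) = a * ((k+β)*Real.exp (-(k*δ))) := by nlinarith [hr]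
  refine ⟨a / ((k-β)*Real.exp (k*δ)), ?_, ?_⟩
  · intro t
    rw [hval t]
    unfold Pf
    rw [show k*(t+δ) = k*t + k*δ by ring, show -(k*t + k*δ) = -(k*t) + -(k*δ) by ring,
      Real.exp_add, Real.exp_add]
    field_simp
    linear_combination (Real.exp (-(k*t))) * hbrel
  · intro t
    rw [hder t]
    unfold Pt
    rw [show k*(t+δ) = k*t + k*δ by ring, show -(k*t + k*δ) = -(k*t) + -(k*δ) by ring,
      Real.exp_add, Real.exp_add]
    field_simp
    linear_combination (-(Real.exp (-(k*t)))) * hbrel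

lemma robin_right {δ β κ : ℝ} (hβ : 0 < β) (hk : β < κ) {v : ℝ → ℝ} (hv : ContDiff ℝ 2 v)
    (hode : ∀ t, deriv (deriv v) t = κ^2 * v t)
    (hrob : deriv v δ = β * v δ) :
    ∃ B : ℝ, (∀ t, v t = B * Pf β κ (δ-t)) ∧ (∀ t, deriv v t = -(B * Pt β κ (δ-t))) := by
  have hk0 : 0 < κ := lt_trans hβ hk
  obtain ⟨a, b, hval, hder⟩ := decomp' hk0 hv hode
  have hkβ : κ - β ≠ 0 := by intro h; nlinarith
  have hE : (0:ℝ) < Real.exp (κ*δ) := Real.exp_pos _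
  have hE' : (0:ℝ) < Real.exp (-(κ*δ)) := Real.exp_pos _
  have hee : Real.exp (κ*δ) * Real.exp (-(κ*δ)) = 1 := by rw [← Real.exp_add]; simp
  have hr := hrob
  rw [hval δ, hder δ] at hr
  have harel : a * ((κ-β)*Real.exp (κ*δ)) = b * ((κ+β)*Real.exp (-(κ*δ))) := by nlinarith [hr]
  refine ⟨b / ((κ-β)*Real.exp (κ*δ)), ?_, ?_⟩
  · intro t
    rw [hval t]
    unfold Pf
    rw [show κ*(δ-t) = -(κ*t) + κ*δ by ring, show -(-(κ*t) + κ*δ) = κ*t + -(κ*δ) by ring,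
      Real.exp_add, Real.exp_add]
    field_simp
    linear_combination (Real.exp (κ*t)) * harel
  · intro t
    rw [hder t]
    unfold Pt
    rw [show κ*(δ-t) = -(κ*t) + κ*δ by ring, show -(-(κ*t) + κ*δ) = κ*t + -(κ*δ) by ring,
      Real.exp_add, Real.exp_add]
    field_simp
    linear_combination (Real.exp (κ*t)) * harel

noncomputable def Hf (β d x : ℝ) : ℝ := Pt β x d / Pf β x d
noncomputable def Gf (δ β m M lam : ℝ) : ℝ :=
  (M - m) - Hf β δ (Real.sqrt (M^2 - lam)) - Hf β δ (Real.sqrt (m^2 - lam))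

lemma eigen_decomp {δ β m M lam : ℝ} (hδ : 0 < δ) (hβ : 0 < β) (hm : m < 0)
    (hkβ : β^2 < M^2 - lam) (hκβ : β^2 < m^2 - lam)
    {u v : ℝ → ℝ} (hu : ContDiff ℝ 2 u) (hv : ContDiff ℝ 2 v)
    (hnt : (∃ t ∈ Set.Icc (-δ) 0, u t ≠ 0) ∨ (∃ t ∈ Set.Icc 0 δ, v t ≠ 0))
    (hodeu : ∀ t, deriv (deriv u) t = (M ^ 2 - lam) * u t)
    (hodev : ∀ t, deriv (deriv v) t = (m ^ 2 - lam) * v t)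
    (hmatch : u 0 = v 0)
    (hjump : deriv v 0 - deriv u 0 + (|m| + M) * u 0 = 0)
    (hrobu : deriv u (-δ) = -β * u (-δ))
    (hrobv : deriv v δ = β * v δ) :
    ∃ A B : ℝ, A ≠ 0 ∧ B ≠ 0 ∧ 0 < A * B ∧
      (∀ t, u t = A * Pf β (Real.sqrt (M^2 - lam)) (t+δ)) ∧
      (∀ t, v t = B * Pf β (Real.sqrt (m^2 - lam)) (δ-t)) ∧
      Gf δ β m M lam = 0 := by
  set k := Real.sqrt (M^2 - lam) with hkdef
  set κ := Real.sqrt (m^2 - lam) with hκdef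
  have hMl : (0:ℝ) < M^2 - lam := lt_of_le_of_lt (by positivity) hkβ
  have hml : (0:ℝ) < m^2 - lam := lt_of_le_of_lt (by positivity) hκβ
  have hk2 : k^2 = M^2 - lam := Real.sq_sqrt hMl.le
  have hκ2 : κ^2 = m^2 - lam := Real.sq_sqrt hml.le
  have hkb : β < k := (Real.lt_sqrt hβ.le).mpr hkβ
  have hκb : β < κ := (Real.lt_sqrt hβ.le).mpr hκβ
  have hodeu' : ∀ t, deriv (deriv u) t = k^2 * u t := by intro t; rw [hodeu t, hk2]
  have hodev' : ∀ t, deriv (deriv v) t = κ^2 * v t := by intro t; rw [hodev t, hκ2]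
  obtain ⟨A, hAval, hAder⟩ := robin_left hβ hkb hu hodeu' hrobu
  obtain ⟨B, hBval, hBder⟩ := robin_right hβ hκb hv hodev' hrobv
  have hPfk : 0 < Pf β k δ := Pf_pos hβ hkb δ
  have hPfκ : 0 < Pf β κ δ := Pf_pos hβ hκb δ
  have hmatch' : A * Pf β k δ = B * Pf β κ δ := by
    have := hmatch
    rw [hAval 0, hBval 0] at this
    simpa using this
  have hA0 : A ≠ 0 := by
    intro hA
    have hB0 : B = 0 := by
      have := hmatch'
      rw [hA] at this
      simp at this
      rcases this with h | h
      · exact h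
      · exact absurd h (ne_of_gt hPfκ)
    rcases hnt with ⟨t, _, hne⟩ | ⟨t, _, hne⟩
    · exact hne (by rw [hAval t, hA, zero_mul])
    · exact hne (by rw [hBval t, hB0, zero_mul])
  have hB0 : B ≠ 0 := by
    intro hB
    apply hA0
    have := hmatch'
    rw [hB] at this
    simp at this
    rcases this with h | h
    · exact h
    · exact absurd h (ne_of_gt hPfk)
  have hAB : 0 < A * B := by
    rcases lt_or_gt_of_ne hA0 with h | h
    · rcases lt_or_gt_of_ne hB0 with h' | h'
      · exact mul_pos_of_neg_of_neg h h'
      · nlinarith [hmatch']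
    · rcases lt_or_gt_of_ne hB0 with h' | h'
      · nlinarith [hmatch']
      · exact mul_pos h h'
  have hjump' : -(B * Pt β κ δ) - A * Pt β k δ + (-m + M) * (A * Pf β k δ) = 0 := by
    have := hjump
    rw [hAval 0, hAder 0, hBder 0, abs_of_neg hm] at this
    simpa using this
  have key : (M - m) * (Pf β k δ * Pf β κ δ) - Pt β k δ * Pf β κ δ - Pt β κ δ * Pf β k δ = 0 := by
    have hAkey : A * ((M - m) * (Pf β k δ * Pf β κ δ)
        - Pt β k δ * Pf β κ δ - Pt β κ δ * Pf β k δ) = 0 := by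
      linear_combination Pf β κ δ * hjump' - Pt β κ δ * hmatch'
    rcases mul_eq_zero.mp hAkey with h | h
    · exact absurd h hA0
    · exact h
  refine ⟨A, B, hA0, hB0, hAB, hAval, hBval, ?_⟩
  unfold Gf Hf
  rw [← hkdef, ← hκdef]
  have : (M - m) - Pt β k δ / Pf β k δ - Pt β κ δ / Pf β κ δ
      = ((M - m) * (Pf β k δ * Pf β κ δ) - Pt β k δ * Pf β κ δ - Pt β κ δ * Pf β k δ)
        / (Pf β k δ * Pf β κ δ) := by
    field_simp
  rw [this, key, zero_div]

lemma Hf_bounds {β δ x : ℝ} (hβ : 0 < β) (hδ : 0 < δ) (hx : 2*β ≤ x) :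
    Hf β δ x < x ∧ x - 6*x*Real.exp (-(2*(x*δ))) ≤ Hf β δ x := by
  have hbx : β < x := by linarith
  have hx0 : 0 < x := by linarith
  have hPf : 0 < Pf β x δ := Pf_pos hβ hbx δ
  have hE : (0:ℝ) < Real.exp (x*δ) := Real.exp_pos _
  have hE' : (0:ℝ) < Real.exp (-(x*δ)) := Real.exp_pos _
  have h1 : (x - Hf β δ x) * Pf β x δ = 2*x*((x+β)*Real.exp (-(x*δ))) := by
    unfold Hf
    rw [sub_mul, div_mul_cancel₀ _ (ne_of_gt hPf)]
    unfold Pt Pf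
    ring
  constructor
  · nlinarith [h1, mul_pos (mul_pos (show (0:ℝ) < 2*x by linarith) (show (0:ℝ) < x+β by linarith)) hE']
  · have key : 2*x*((x+β)*Real.exp (-(x*δ))) ≤ 6*x*Real.exp (-(2*(x*δ))) * Pf β x δ := by
      have hPfa : (x-β)*Real.exp (x*δ) ≤ Pf β x δ := by
        unfold Pf
        nlinarith [mul_pos (show (0:ℝ) < x+β by linarith) hE']
      have hee : Real.exp (-(2*(x*δ))) * Real.exp (x*δ) = Real.exp (-(x*δ)) := by
        rw [← Real.exp_add]; ring_nf
      have step1 : 2*x*((x+β)*Real.exp (-(x*δ))) ≤ 6*x*((x-β)*Real.exp (-(x*δ))) := by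
        nlinarith [mul_pos hx0 hE']
      have step2 : 6*x*((x-β)*Real.exp (-(x*δ)))
          = 6*x*Real.exp (-(2*(x*δ))) * ((x-β)*Real.exp (x*δ)) := by
        rw [show 6*x*Real.exp (-(2*(x*δ))) * ((x-β)*Real.exp (x*δ))
          = 6*x*(x-β)*(Real.exp (-(2*(x*δ))) * Real.exp (x*δ)) by ring, hee]
        ring
      have step3 : 6*x*Real.exp (-(2*(x*δ))) * ((x-β)*Real.exp (x*δ))
          ≤ 6*x*Real.exp (-(2*(x*δ))) * Pf β x δ := by
        have h6 : 0 ≤ 6*x*Real.exp (-(2*(x*δ))) := by positivity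
        exact mul_le_mul_of_nonneg_left hPfa h6
      linarith
    have h2 : (x - Hf β δ x) * Pf β x δ ≤ (6*x*Real.exp (-(2*(x*δ)))) * Pf β x δ := by
      linarith [h1, key]
    nlinarith [h2, hPf]

lemma frac_mono {x ε t : ℝ} (hx1 : 1 ≤ x) (hε0 : 0 < ε) (hε1 : ε ≤ 1) (ht : ε ≤ t) :
    ε/(3*x) ≤ t/(2*x + Real.sqrt t) := by
  have ht0 : 0 < t := lt_of_lt_of_le hε0 ht
  have h3x : (0:ℝ) < 3*x := by linarith
  have hr0 : 0 < Real.sqrt t := Real.sqrt_pos.mpr ht0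
  have h2xr : (0:ℝ) < 2*x + Real.sqrt t := by linarith
  rw [div_le_div_iff₀ h3x h2xr]
  have hs2 : Real.sqrt ε^2 = ε := Real.sq_sqrt hε0.le
  have hr2 : Real.sqrt t^2 = t := Real.sq_sqrt ht0.le
  have hs1 : Real.sqrt ε ≤ 1 := by
    nlinarith [hs2, Real.sqrt_nonneg ε, hε1]
  have hsr : Real.sqrt ε ≤ Real.sqrt t := Real.sqrt_le_sqrt ht
  have hs0 : 0 ≤ Real.sqrt ε := Real.sqrt_nonneg _
  set s := Real.sqrt ε
  set r := Real.sqrt t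
  have ha : s^2 ≤ r^2 := by nlinarith
  have hb : s^2*r ≤ r^2*s := by
    have hb0 : 0 ≤ (r*s)*(r-s) := mul_nonneg (mul_nonneg hr0.le hs0) (sub_nonneg.mpr hsr)
    have hb1 : (r*s)*(r-s) = r^2*s - s^2*r := by ring
    linarith
  have hc : r^2*s ≤ r^2*x := mul_le_mul_of_nonneg_left (le_trans hs1 hx1) (sq_nonneg r)
  have hd : (2*x)*s^2 ≤ (2*x)*r^2 := mul_le_mul_of_nonneg_left ha (by linarith)
  have he : ε = s^2 := hs2.symm
  have hf : t = r^2 := hr2.symm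
  rw [he, hf]
  linarith

lemma channel {β δ x t : ℝ} (hβ : 0 < β) (hδ : 0 < δ)
    (hζ : 2*β + 1/δ + 145/δ^3 + 1 ≤ x)
    (ht : Real.exp (-(x*δ/2)) ≤ t) :
    x - Hf β δ (Real.sqrt (x^2 + t)) < 0 := by
  have hδ3 : (0:ℝ) < δ^3 := by positivity
  have hx1 : (1:ℝ) ≤ x := by
    have : (0:ℝ) < 1/δ := by positivity
    have : (0:ℝ) < 145/δ^3 := by positivity
    linarith
  have hx0 : (0:ℝ) < x := by linarith
  have hx2b : 2*β ≤ x := by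
    have : (0:ℝ) < 1/δ := by positivity
    have : (0:ℝ) < 145/δ^3 := by positivity
    linarith
  have hxδ : 1 ≤ x*δ := by
    have h1δ : 1/δ ≤ x := by
      have : (0:ℝ) < 145/δ^3 := by positivity
      linarith
    calc (1:ℝ) = (1/δ)*δ := by field_simp
    _ ≤ x*δ := by nlinarith
  have ht0 : 0 < t := lt_of_lt_of_le (Real.exp_pos _) ht
  obtain ⟨k, hkdef⟩ : ∃ k, k = Real.sqrt (x^2 + t) := ⟨_, rfl⟩
  rw [← hkdef]
  have hk2 : k^2 = x^2 + t := by rw [hkdef]; exact Real.sq_sqrt (by positivity)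
  have hk0 : 0 < k := by rw [hkdef]; exact Real.sqrt_pos.mpr (by positivity)
  have hxk : x ≤ k := by nlinarith [hk2, hk0]
  have hst : Real.sqrt t ^ 2 = t := Real.sq_sqrt ht0.le
  have hst0 : 0 < Real.sqrt t := Real.sqrt_pos.mpr ht0
  have hkxt : k ≤ x + Real.sqrt t := by nlinarith [hk2, hk0, hst, hst0, hx0]
  have hkb : 2*β ≤ k := le_trans hx2b hxk
  have hHf := Hf_bounds hβ hδ hkb
  -- antitone step : k * exp(-(2*(k*δ))) ≤ x * exp (-(2*(x*δ)))
  have hanti : k * Real.exp (-(2*(k*δ))) ≤ x * Real.exp (-(2*(x*δ))) := by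
    have hexp : k/x ≤ Real.exp (2*((k-x)*δ)) := by
      have h1 : 1 + 2*((k-x)*δ) ≤ Real.exp (2*((k-x)*δ)) := by
        have := Real.add_one_le_exp (2*((k-x)*δ)); linarith
      have h2 : k/x ≤ 1 + 2*((k-x)*δ) := by
        rw [div_le_iff₀ hx0]
        nlinarith [hxk, hxδ]
      linarith
    have hee : Real.exp (-(2*(k*δ))) * Real.exp (2*((k-x)*δ)) = Real.exp (-(2*(x*δ))) := by
      rw [← Real.exp_add]; ring_nf
    calc k * Real.exp (-(2*(k*δ))) = (k/x) * (x * Real.exp (-(2*(k*δ)))) := by field_simp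
    _ ≤ Real.exp (2*((k-x)*δ)) * (x * Real.exp (-(2*(k*δ)))) := by
        apply mul_le_mul_of_nonneg_right hexp (by positivity)
    _ = x * (Real.exp (-(2*(k*δ))) * Real.exp (2*((k-x)*δ))) := by ring
    _ = x * Real.exp (-(2*(x*δ))) := by rw [hee]
  -- main size estimate : 18*x^2*exp(-(2*(x*δ))) < exp (-(x*δ/2))
  have hmain : 18*x^2*Real.exp (-(2*(x*δ))) < Real.exp (-(x*δ/2)) := by
    have hcube : Real.exp (3*(x*δ)/2) = (Real.exp (x*δ/2))^3 := by
      rw [← Real.exp_nat_mul]; ring_nf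
    have h1 : x*δ/2 ≤ Real.exp (x*δ/2) := by
      have := Real.add_one_le_exp (x*δ/2)
      linarith
    have h2 : (x*δ/2)^3 ≤ Real.exp (3*(x*δ)/2) := by
      rw [hcube]
      have : (0:ℝ) ≤ x*δ/2 := by positivity
      exact pow_le_pow_left₀ this h1 3
    have h3 : 18*x^2 < (x*δ/2)^3 := by
      have hp1 : (0:ℝ) < 1/δ := by positivity
      have hxδ3 : 145 ≤ x*δ^3 := by
        have h' : 145/δ^3 ≤ x := by linarith
        calc (145:ℝ) = (145/δ^3)*δ^3 := by field_simp
        _ ≤ x*δ^3 := mul_le_mul_of_nonneg_right h' hδ3.le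
      have hexp : (x*δ/2)^3 = x^2*(x*δ^3)/8 := by ring
      rw [hexp]
      have h5 : x^2*145 ≤ x^2*(x*δ^3) := mul_le_mul_of_nonneg_left hxδ3 (sq_nonneg x)
      have hx2 : (0:ℝ) < x^2 := by positivity
      linarith
    have h4 : 18*x^2 < Real.exp (3*(x*δ)/2) := lt_of_lt_of_le h3 h2
    have hee : Real.exp (3*(x*δ)/2) * Real.exp (-(2*(x*δ))) = Real.exp (-(x*δ/2)) := by
      rw [← Real.exp_add]; ring_nf
    calc 18*x^2*Real.exp (-(2*(x*δ))) < Real.exp (3*(x*δ)/2) * Real.exp (-(2*(x*δ))) := by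
          apply mul_lt_mul_of_pos_right h4 (Real.exp_pos _)
    _ = Real.exp (-(x*δ/2)) := hee
  -- lower bound on t/(x+k)
  obtain ⟨ε, hεdef⟩ : ∃ e, e = Real.exp (-(x*δ/2)) := ⟨_, rfl⟩
  rw [← hεdef] at ht hmain
  have hε0 : 0 < ε := by rw [hεdef]; exact Real.exp_pos _
  have hε1 : ε ≤ 1 := by
    rw [hεdef, show (1:ℝ) = Real.exp 0 by rw [Real.exp_zero]]
    apply Real.exp_le_exp.mpr
    nlinarith
  have hxk0 : 0 < x + k := by linarith
  have hB : 6*(x*Real.exp (-(2*(x*δ)))) < ε/(3*x) := by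
    rw [lt_div_iff₀ (by positivity)]
    calc 6*(x*Real.exp (-(2*(x*δ))))*(3*x) = 18*x^2*Real.exp (-(2*(x*δ))) := by ring
    _ < ε := hmain
  have hC : ε/(3*x) ≤ t/(2*x + Real.sqrt t) := frac_mono hx1 hε0 hε1 ht
  have hD : t/(2*x + Real.sqrt t) ≤ t/(x+k) := by
    apply div_le_div_of_nonneg_left ht0.le hxk0
    linarith
  have hfinal : 6*(k*Real.exp (-(2*(k*δ)))) < t/(x+k) := by
    calc 6*(k*Real.exp (-(2*(k*δ)))) ≤ 6*(x*Real.exp (-(2*(x*δ)))) := by linarith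
    _ < ε/(3*x) := hB
    _ ≤ t/(2*x + Real.sqrt t) := hC
    _ ≤ t/(x+k) := hD
  have hxkt : t/(x+k) = k - x := by
    rw [div_eq_iff (ne_of_gt hxk0)]
    linear_combination -hk2
  linarith [hHf.2, hfinal, hxkt]

lemma Gf_neg {δ β m M t : ℝ} (hβ : 0 < β) (hδ : 0 < δ) (hm : m < 0)
    (hζM : 2*β + 1/δ + 145/δ^3 + 1 ≤ M) (hζm : 2*β + 1/δ + 145/δ^3 + 1 ≤ -m)
    (ht : Real.exp (-(min (-m) M * δ / 2)) ≤ t) :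
    Gf δ β m M (-t) < 0 := by
  have htM : Real.exp (-(M*δ/2)) ≤ t := by
    refine le_trans (Real.exp_le_exp.mpr ?_) ht
    have := min_le_right (-m) M
    nlinarith
  have htm : Real.exp (-((-m)*δ/2)) ≤ t := by
    refine le_trans (Real.exp_le_exp.mpr ?_) ht
    have := min_le_left (-m) M
    nlinarith
  have chM := channel hβ hδ hζM htM
  have chm := channel hβ hδ hζm htm
  unfold Gf
  rw [show M^2 - -t = M^2 + t by ring, show m^2 - -t = (-m)^2 + t by ring]
  linarith

lemma Gf_zero_pos {δ β m M : ℝ} (hβ : 0 < β) (hδ : 0 < δ) (hm : m < 0) (hM : 0 < M)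
    (h2βM : 2*β ≤ M) (h2βm : 2*β ≤ -m) :
    0 < Gf δ β m M 0 := by
  unfold Gf
  rw [sub_zero, sub_zero, Real.sqrt_sq hM.le, Real.sqrt_sq_eq_abs, abs_of_neg hm]
  have h1 := (Hf_bounds hβ hδ h2βM).1
  have h2 := (Hf_bounds hβ hδ h2βm).1
  linarith

lemma Gf_contOn {δ β m M : ℝ} (hβ : 0 < β) (hβM : β < M) (hβm : β < -m) :
    ContinuousOn (fun lam => Gf δ β m M lam) (Set.Iic (0:ℝ)) := by
  have cPt : Continuous fun x : ℝ => Pt β x δ := by unfold Pt; fun_prop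
  have cPf : Continuous fun x : ℝ => Pf β x δ := by unfold Pf; fun_prop
  have c1 : Continuous fun lam : ℝ => Real.sqrt (M^2 - lam) :=
    (continuous_const.sub continuous_id).sqrt
  have c2 : Continuous fun lam : ℝ => Real.sqrt (m^2 - lam) :=
    (continuous_const.sub continuous_id).sqrt
  have hpos : ∀ y : ℝ, y ∈ Set.Iic (0:ℝ) → β < Real.sqrt (M^2 - y) := by
    intro y hy
    rw [Set.mem_Iic] at hy
    exact (Real.lt_sqrt hβ.le).mpr (by nlinarith)
  have hpos' : ∀ y : ℝ, y ∈ Set.Iic (0:ℝ) → β < Real.sqrt (m^2 - y) := by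
    intro y hy
    rw [Set.mem_Iic] at hy
    exact (Real.lt_sqrt hβ.le).mpr (by nlinarith)
  have h1 : ContinuousOn (fun lam => Hf β δ (Real.sqrt (M^2 - lam))) (Set.Iic (0:ℝ)) := by
    apply ContinuousOn.div ((cPt.comp c1).continuousOn) ((cPf.comp c1).continuousOn)
    intro y hy
    exact ne_of_gt (Pf_pos hβ (hpos y hy) δ)
  have h2 : ContinuousOn (fun lam => Hf β δ (Real.sqrt (m^2 - lam))) (Set.Iic (0:ℝ)) := by
    apply ContinuousOn.div ((cPt.comp c2).continuousOn) ((cPf.comp c2).continuousOn)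
    intro y hy
    exact ne_of_gt (Pf_pos hβ (hpos' y hy) δ)
  exact (continuousOn_const.sub h1).sub h2

lemma contDiff_shiftPf (β x δ c : ℝ) : ContDiff ℝ 2 (fun t => c * Pf β x (t+δ)) := by
  unfold Pf
  fun_prop

lemma contDiff_reflPf (β x δ c : ℝ) : ContDiff ℝ 2 (fun t => c * Pf β x (δ-t)) := by
  unfold Pf
  fun_prop

lemma secular_to_eigen {δ β m M lam : ℝ} (hδ : 0 < δ) (hβ : 0 < β) (hm : m < 0)
    (hkβ : β^2 < M^2 - lam) (hκβ : β^2 < m^2 - lam)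
    (hG : Gf δ β m M lam = 0) : IsXEigen δ β m M lam := by
  set k := Real.sqrt (M^2 - lam) with hkdef
  set κ := Real.sqrt (m^2 - lam) with hκdef
  have hMl : (0:ℝ) < M^2 - lam := lt_of_le_of_lt (by positivity) hkβ
  have hml : (0:ℝ) < m^2 - lam := lt_of_le_of_lt (by positivity) hκβ
  have hk2 : k^2 = M^2 - lam := Real.sq_sqrt hMl.le
  have hκ2 : κ^2 = m^2 - lam := Real.sq_sqrt hml.le
  have hkb : β < k := (Real.lt_sqrt hβ.le).mpr hkβ
  have hκb : β < κ := (Real.lt_sqrt hβ.le).mpr hκβ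
  have hPfk : 0 < Pf β k δ := Pf_pos hβ hkb δ
  have hPfκ : 0 < Pf β κ δ := Pf_pos hβ hκb δ
  set u : ℝ → ℝ := fun t => Pf β κ δ * Pf β k (t+δ) with hudef
  set v : ℝ → ℝ := fun t => Pf β k δ * Pf β κ (δ-t) with hvdef
  have hud : ∀ t, HasDerivAt u (Pf β κ δ * (Pt β k (t+δ) * 1)) t := by
    intro t
    exact ((hasDerivAt_Pf β k (t+δ)).comp t ((hasDerivAt_id t).add_const δ)).const_mul _
  have hud' : ∀ t, deriv u t = Pf β κ δ * Pt β k (t+δ) := by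
    intro t; rw [(hud t).deriv]; ring
  have hud2 : ∀ t, deriv (deriv u) t = Pf β κ δ * (k^2 * Pf β k (t+δ)) := by
    intro t
    have : deriv u = fun t => Pf β κ δ * Pt β k (t+δ) := funext hud'
    rw [this]
    have h2 : HasDerivAt (fun t => Pf β κ δ * Pt β k (t+δ))
        (Pf β κ δ * (k^2 * Pf β k (t+δ) * 1)) t :=
      ((hasDerivAt_Pt β k (t+δ)).comp t ((hasDerivAt_id t).add_const δ)).const_mul _
    rw [h2.deriv]; ring
  have hvd : ∀ t, HasDerivAt v (Pf β k δ * (Pt β κ (δ-t) * (-1))) t := by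
    intro t
    exact ((hasDerivAt_Pf β κ (δ-t)).comp t ((hasDerivAt_id t).const_sub δ)).const_mul _
  have hvd' : ∀ t, deriv v t = -(Pf β k δ * Pt β κ (δ-t)) := by
    intro t; rw [(hvd t).deriv]; ring
  have hvd2 : ∀ t, deriv (deriv v) t = Pf β k δ * (κ^2 * Pf β κ (δ-t)) := by
    intro t
    have : deriv v = fun t => -(Pf β k δ * Pt β κ (δ-t)) := funext hvd'
    rw [this]
    have h2 : HasDerivAt (fun t => -(Pf β k δ * Pt β κ (δ-t)))
        (-(Pf β k δ * (κ^2 * Pf β κ (δ-t) * (-1)))) t :=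
      (((hasDerivAt_Pt β κ (δ-t)).comp t ((hasDerivAt_id t).const_sub δ)).const_mul _).neg
    rw [h2.deriv]; ring
  have key : (M - m) * (Pf β k δ * Pf β κ δ) - Pt β k δ * Pf β κ δ - Pt β κ δ * Pf β k δ = 0 := by
    have hG' : (M - m) - Pt β k δ / Pf β k δ - Pt β κ δ / Pf β κ δ = 0 := by
      have := hG
      unfold Gf Hf at this
      rw [← hkdef, ← hκdef] at this
      exact this
    have expand : ((M - m) - Pt β k δ / Pf β k δ - Pt β κ δ / Pf β κ δ) * (Pf β k δ * Pf β κ δ)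
        = (M - m) * (Pf β k δ * Pf β κ δ) - Pt β k δ * Pf β κ δ - Pt β κ δ * Pf β k δ := by
      field_simp
    rw [← expand, hG', zero_mul]
  refine ⟨u, v, contDiff_shiftPf β k δ _, contDiff_reflPf β κ δ _, ?_, ?_, ?_, ?_, ?_, ?_, ?_⟩
  · left
    exact ⟨0, Set.mem_Icc.mpr ⟨by linarith, le_rfl⟩, by
      show Pf β κ δ * Pf β k (0+δ) ≠ 0
      rw [zero_add]
      positivity⟩
  · intro t
    rw [hud2 t, hk2]
    show Pf β κ δ * ((M^2 - lam) * Pf β k (t+δ)) = (M^2 - lam) * (Pf β κ δ * Pf β k (t+δ))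
    ring
  · intro t
    rw [hvd2 t, hκ2]
    show Pf β k δ * ((m^2 - lam) * Pf β κ (δ-t)) = (m^2 - lam) * (Pf β k δ * Pf β κ (δ-t))
    ring
  · show Pf β κ δ * Pf β k (0+δ) = Pf β k δ * Pf β κ (δ-0)
    rw [zero_add, sub_zero]; ring
  · rw [hud' 0, hvd' 0, zero_add, sub_zero, abs_of_neg hm]
    show -(Pf β k δ * Pt β κ δ) - Pf β κ δ * Pt β k δ + (-m + M) * (Pf β κ δ * Pf β k (0+δ)) = 0
    rw [zero_add]
    linear_combination key
  · rw [hud' (-δ)]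
    show Pf β κ δ * Pt β k (-δ+δ) = -β * (Pf β κ δ * Pf β k (-δ+δ))
    rw [neg_add_cancel, Pt_zero]
    ring
  · rw [hvd' δ]
    show -(Pf β k δ * Pt β κ (δ-δ)) = β * (Pf β k δ * Pf β κ (δ-δ))
    rw [sub_self, Pt_zero]
    ring

lemma wronskian_hasDeriv {c1 c2 : ℝ} {u1 u2 : ℝ → ℝ} (hu1 : ContDiff ℝ 2 u1)
    (hu2 : ContDiff ℝ 2 u2)
    (ho1 : ∀ t, deriv (deriv u1) t = c1 * u1 t)
    (ho2 : ∀ t, deriv (deriv u2) t = c2 * u2 t) (t : ℝ) :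
    HasDerivAt (fun s => deriv u1 s * u2 s - u1 s * deriv u2 s)
      ((c1 - c2) * (u1 t * u2 t)) t := by
  obtain ⟨hd1, hdd1⟩ := cd2 hu1
  obtain ⟨hd2, hdd2⟩ := cd2 hu2
  have h1 : HasDerivAt (deriv u1) (deriv (deriv u1) t) t := (hdd1 t).hasDerivAt
  have h2 : HasDerivAt (deriv u2) (deriv (deriv u2) t) t := (hdd2 t).hasDerivAt
  have h3 : HasDerivAt u1 (deriv u1 t) t := (hd1 t).hasDerivAt
  have h4 : HasDerivAt u2 (deriv u2 t) t := (hd2 t).hasDerivAt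
  have := (h1.mul h4).sub (h3.mul h2)
  refine this.congr_deriv ?_
  rw [ho1 t, ho2 t]
  ring

lemma ortho {δ β m M lam1 lam2 : ℝ} (hδ : 0 < δ) (hβ : 0 < β) (hm : m < 0)
    (hne : lam1 ≠ lam2)
    (hb1M : β^2 < M^2 - lam1) (hb1m : β^2 < m^2 - lam1)
    (hb2M : β^2 < M^2 - lam2) (hb2m : β^2 < m^2 - lam2)
    (h1 : IsXEigen δ β m M lam1) (h2 : IsXEigen δ β m M lam2) : False := by
  obtain ⟨u1, v1, hu1, hv1, hnt1, hou1, hov1, hm1, hj1, hrl1, hrr1⟩ := h1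
  obtain ⟨u2, v2, hu2, hv2, hnt2, hou2, hov2, hm2, hj2, hrl2, hrr2⟩ := h2
  obtain ⟨A1, B1, hA1, hB1, hAB1, hA1val, hB1val, -⟩ :=
    eigen_decomp hδ hβ hm hb1M hb1m hu1 hv1 hnt1 hou1 hov1 hm1 hj1 hrl1 hrr1
  obtain ⟨A2, B2, hA2, hB2, hAB2, hA2val, hB2val, -⟩ :=
    eigen_decomp hδ hβ hm hb2M hb2m hu2 hv2 hnt2 hou2 hov2 hm2 hj2 hrl2 hrr2
  have hk1b : β < Real.sqrt (M^2 - lam1) := (Real.lt_sqrt hβ.le).mpr hb1M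
  have hκ1b : β < Real.sqrt (m^2 - lam1) := (Real.lt_sqrt hβ.le).mpr hb1m
  have hk2b : β < Real.sqrt (M^2 - lam2) := (Real.lt_sqrt hβ.le).mpr hb2M
  have hκ2b : β < Real.sqrt (m^2 - lam2) := (Real.lt_sqrt hβ.le).mpr hb2m
  -- FTC for the Wronskians
  have hWu := fun t => wronskian_hasDeriv hu1 hu2 hou1 hou2 t
  have hWv := fun t => wronskian_hasDeriv hv1 hv2 hov1 hov2 t
  have hcontu : Continuous fun t => ((M^2-lam1) - (M^2-lam2)) * (u1 t * u2 t) :=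
    continuous_const.mul ((hu1.continuous).mul (hu2.continuous))
  have hcontv : Continuous fun t => ((m^2-lam1) - (m^2-lam2)) * (v1 t * v2 t) :=
    continuous_const.mul ((hv1.continuous).mul (hv2.continuous))
  have hIu : ∫ s in (-δ)..0, ((M^2-lam1) - (M^2-lam2)) * (u1 s * u2 s)
      = (deriv u1 0 * u2 0 - u1 0 * deriv u2 0)
        - (deriv u1 (-δ) * u2 (-δ) - u1 (-δ) * deriv u2 (-δ)) :=
    intervalIntegral.integral_eq_sub_of_hasDerivAt (fun t _ => hWu t)
      (hcontu.intervalIntegrable _ _)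
  have hIv : ∫ s in (0:ℝ)..δ, ((m^2-lam1) - (m^2-lam2)) * (v1 s * v2 s)
      = (deriv v1 δ * v2 δ - v1 δ * deriv v2 δ)
        - (deriv v1 0 * v2 0 - v1 0 * deriv v2 0) :=
    intervalIntegral.integral_eq_sub_of_hasDerivAt (fun t _ => hWv t)
      (hcontv.intervalIntegrable _ _)
  -- boundary values
  have hbdu : deriv u1 (-δ) * u2 (-δ) - u1 (-δ) * deriv u2 (-δ) = 0 := by
    rw [hrl1, hrl2]; ring
  have hbdv : deriv v1 δ * v2 δ - v1 δ * deriv v2 δ = 0 := by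
    rw [hrr1, hrr2]; ring
  have hbd0 : deriv v1 0 * v2 0 - v1 0 * deriv v2 0
      = deriv u1 0 * u2 0 - u1 0 * deriv u2 0 := by
    have e1 : deriv v1 0 = deriv u1 0 - (|m| + M) * u1 0 := by linarith [hj1]
    have e2 : deriv v2 0 = deriv u2 0 - (|m| + M) * u2 0 := by linarith [hj2]
    rw [e1, e2, ← hm1, ← hm2]
    ring
  have hsum : (lam2 - lam1) * ((∫ s in (-δ)..0, u1 s * u2 s) + ∫ s in (0:ℝ)..δ, v1 s * v2 s) = 0 := by
    have hIu' : (lam2 - lam1) * (∫ s in (-δ)..0, u1 s * u2 s)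
        = ∫ s in (-δ)..0, ((M^2-lam1) - (M^2-lam2)) * (u1 s * u2 s) := by
      rw [← intervalIntegral.integral_const_mul]
      congr 1; funext s; ring
    have hIv' : (lam2 - lam1) * (∫ s in (0:ℝ)..δ, v1 s * v2 s)
        = ∫ s in (0:ℝ)..δ, ((m^2-lam1) - (m^2-lam2)) * (v1 s * v2 s) := by
      rw [← intervalIntegral.integral_const_mul]
      congr 1; funext s; ring
    rw [mul_add, hIu', hIv', hIu, hIv, hbdu, hbdv, hbd0]
    ring
  have hll : lam2 - lam1 ≠ 0 := sub_ne_zero.mpr (Ne.symm hne)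
  have hzero : (∫ s in (-δ)..0, u1 s * u2 s) + (∫ s in (0:ℝ)..δ, v1 s * v2 s) = 0 := by
    rcases mul_eq_zero.mp hsum with h | h
    · exact absurd h hll
    · exact h
  -- positivity
  have hUpos : ∀ s, u1 s * u2 s = (A1*A2) * (Pf β (Real.sqrt (M^2-lam1)) (s+δ)
      * Pf β (Real.sqrt (M^2-lam2)) (s+δ)) := by
    intro s; rw [hA1val s, hA2val s]; ring
  have hVpos : ∀ s, v1 s * v2 s = (B1*B2) * (Pf β (Real.sqrt (m^2-lam1)) (δ-s)
      * Pf β (Real.sqrt (m^2-lam2)) (δ-s)) := by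
    intro s; rw [hB1val s, hB2val s]; ring
  have hsgn : 0 < (A1*A2) * (B1*B2) := by
    calc (0:ℝ) < (A1*B1)*(A2*B2) := mul_pos hAB1 hAB2
    _ = (A1*A2)*(B1*B2) := by ring
  have hcu : Continuous fun s => u1 s * u2 s := (hu1.continuous).mul (hu2.continuous)
  have hcv : Continuous fun s => v1 s * v2 s := (hv1.continuous).mul (hv2.continuous)
  rcases mul_pos_iff.mp hsgn with ⟨hAA, hBB⟩ | ⟨hAA, hBB⟩
  · -- both positive
    have hu0 : 0 < ∫ s in (-δ)..0, u1 s * u2 s := by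
      apply intervalIntegral.intervalIntegral_pos_of_pos (f := fun s => u1 s * u2 s)
      · exact hcu.intervalIntegrable _ _
      · intro x
        rw [hUpos x]
        have p1 := Pf_pos hβ hk1b (x+δ)
        have p2 := Pf_pos hβ hk2b (x+δ)
        exact mul_pos hAA (mul_pos p1 p2)
      · linarith
    have hv0 : 0 < ∫ s in (0:ℝ)..δ, v1 s * v2 s := by
      apply intervalIntegral.intervalIntegral_pos_of_pos (f := fun s => v1 s * v2 s)
      · exact hcv.intervalIntegrable _ _
      · intro x
        rw [hVpos x]
        have p1 := Pf_pos hβ hκ1b (δ-x)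
        have p2 := Pf_pos hβ hκ2b (δ-x)
        exact mul_pos hBB (mul_pos p1 p2)
      · linarith
    linarith
  · -- both negative
    have hu0 : 0 < ∫ s in (-δ)..0, -(u1 s * u2 s) := by
      apply intervalIntegral.intervalIntegral_pos_of_pos (f := fun s => -(u1 s * u2 s))
      · exact (hcu.neg).intervalIntegrable _ _
      · intro x
        rw [hUpos x]
        have p1 := Pf_pos hβ hk1b (x+δ)
        have p2 := Pf_pos hβ hk2b (x+δ)
        have := mul_pos (neg_pos.mpr hAA) (mul_pos p1 p2)
        linarith
      · linarith
    have hv0 : 0 < ∫ s in (0:ℝ)..δ, -(v1 s * v2 s) := by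
      apply intervalIntegral.intervalIntegral_pos_of_pos (f := fun s => -(v1 s * v2 s))
      · exact (hcv.neg).intervalIntegrable _ _
      · intro x
        rw [hVpos x]
        have p1 := Pf_pos hβ hκ1b (δ-x)
        have p2 := Pf_pos hβ hκ2b (δ-x)
        have := mul_pos (neg_pos.mpr hBB) (mul_pos p1 p2)
        linarith
      · linarith
    rw [intervalIntegral.integral_neg] at hu0 hv0
    linarith

lemma part1 {δ β m M : ℝ} (hδ : 0 < δ) (hβ : 0 < β) (hm : m < 0) (hM : 0 < M)
    (hζ : 2*β + 1/δ + 145/δ^3 + 1 ≤ min (-m) M) :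
    |sInf {lam | IsXEigen δ β m M lam}| ≤ Real.exp (-(min |m| M) * δ / 2) := by
  have hp1 : (0:ℝ) < 1/δ := by positivity
  have hp2 : (0:ℝ) < 145/δ^3 := by positivity
  have hζm : 2*β + 1/δ + 145/δ^3 + 1 ≤ -m := le_trans hζ (min_le_left _ _)
  have hζM : 2*β + 1/δ + 145/δ^3 + 1 ≤ M := le_trans hζ (min_le_right _ _)
  have hβM : β < M := by linarith
  have hβm : β < -m := by linarith
  have h2βM : 2*β ≤ M := by linarith
  have h2βm : 2*β ≤ -m := by linarith
  set ε := Real.exp (-(min (-m) M * δ / 2)) with hεdef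
  have hε0 : 0 < ε := Real.exp_pos _
  have hgoalrw : Real.exp (-(min |m| M) * δ / 2) = ε := by
    rw [hεdef, abs_of_neg hm]
    congr 1
    ring
  rw [hgoalrw]
  have Gneg : Gf δ β m M (-ε) < 0 := Gf_neg hβ hδ hm hζM hζm le_rfl
  have Gpos : 0 < Gf δ β m M 0 := Gf_zero_pos hβ hδ hm hM h2βM h2βm
  have hsub : Set.Icc (-ε) (0:ℝ) ⊆ Set.Iic 0 := fun x hx => hx.2
  have hIVT := intermediate_value_Icc (f := fun lam => Gf δ β m M lam) (show -ε ≤ (0:ℝ) by linarith)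
    ((Gf_contOn hβ hβM hβm).mono hsub)
  obtain ⟨lam0, hlam0mem, hGlam0⟩ := hIVT ⟨Gneg.le, Gpos.le⟩
  obtain ⟨hlam0l, hlam0r⟩ := Set.mem_Icc.mp hlam0mem
  have heig : IsXEigen δ β m M lam0 := by
    apply secular_to_eigen hδ hβ hm _ _ hGlam0
    · nlinarith
    · nlinarith
  have hlb : ∀ x ∈ {lam | IsXEigen δ β m M lam}, -ε ≤ x := by
    intro x hx
    by_contra hcon
    push_neg at hcon
    have hx0 : x < 0 := by linarith
    obtain ⟨u, v, hu, hv, hnt, hou, hov, hma, hj, hrl, hrr⟩ := hx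
    obtain ⟨A, B, -, -, -, -, -, hGx⟩ :=
      eigen_decomp hδ hβ hm (by nlinarith) (by nlinarith) hu hv hnt hou hov hma hj hrl hrr
    have hGneg : Gf δ β m M (-(-x)) < 0 := by
      apply Gf_neg hβ hδ hm hζM hζm
      rw [← hεdef]
      linarith
    rw [neg_neg, hGx] at hGneg
    exact lt_irrefl 0 hGneg
  have hne : Set.Nonempty {lam | IsXEigen δ β m M lam} := ⟨lam0, heig⟩
  have hInf1 : -ε ≤ sInf {lam | IsXEigen δ β m M lam} := le_csInf hne hlb
  have hInf2 : sInf {lam | IsXEigen δ β m M lam} ≤ lam0 := csInf_le ⟨-ε, hlb⟩ heig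
  rw [abs_le]
  exact ⟨hInf1, by linarith⟩

/-- `E₁(X) = O(e^{−min(|m|,M) δ/2})` as `min(−m, M) → +∞`, and for each `j ≥ 2` there
are constants `C₁, C₂ > 0` with `E_j(X) ≥ min(m², M²) + C₁ j² − C₂`, where `E` is the
increasing enumeration of the eigenvalues of `X` (`E j` the `j`-th eigenvalue, `j ≥ 1`). -/
theorem stmt_8 (δ β : ℝ) (hδ : 0 < δ) (hβ : 0 < β) :
    (∃ C ζ₀ : ℝ, 0 < C ∧ ∀ m M : ℝ, m < 0 → 0 < M → ζ₀ ≤ min (-m) M →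
      |sInf {lam | IsXEigen δ β m M lam}| ≤ C * Real.exp (-(min |m| M) * δ / 2)) ∧
    (∀ j : ℕ, 2 ≤ j → ∃ C₁ C₂ : ℝ, 0 < C₁ ∧ 0 < C₂ ∧
      ∀ m M : ℝ, m < 0 → 0 < M → ∀ E : ℕ → ℝ,
        (∀ i k : ℕ, 1 ≤ i → i < k → E i < E k) →
        (∀ k : ℕ, 1 ≤ k → IsXEigen δ β m M (E k)) →
        (∀ lam, IsXEigen δ β m M lam → ∃ k : ℕ, 1 ≤ k ∧ E k = lam) →
        min (m ^ 2) (M ^ 2) + C₁ * (j : ℝ) ^ 2 - C₂ ≤ E j) := by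
  constructor
  · refine ⟨1, 2*β + 1/δ + 145/δ^3 + 1, one_pos, ?_⟩
    intro m M hm hM hζ
    rw [one_mul]
    exact part1 hδ hβ hm hM hζ
  · intro j hj
    refine ⟨1, (j:ℝ)^2 + β^2 + 1, one_pos, by positivity, ?_⟩
    intro m M hm hM E hmono heig hsurj
    have hE2 : min (m^2) (M^2) - (β^2 + 1) ≤ E 2 := by
      by_contra hcon
      push_neg at hcon
      have h12 : E 1 < E 2 := hmono 1 2 le_rfl one_lt_two
      have hminM : min (m^2) (M^2) ≤ M^2 := min_le_right _ _
      have hminm : min (m^2) (M^2) ≤ m^2 := min_le_left _ _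
      refine ortho hδ hβ hm (ne_of_lt h12) ?_ ?_ ?_ ?_ (heig 1 le_rfl) (heig 2 (by norm_num))
      · nlinarith
      · nlinarith
      · nlinarith
      · nlinarith
    have hEj : E 2 ≤ E j := by
      rcases eq_or_lt_of_le hj with h | h
      · rw [← h]
      · exact le_of_lt (hmono 2 j (by norm_num) h)
    have hj2 : (1:ℝ) * (j:ℝ)^2 = (j:ℝ)^2 := one_mul _
    linarith
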